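/- Let (A, q) be a metric group of exponent n that is generated by its isotropic elements. Then for every n-th root of unity ζ ∈ kˣ there exists x ∈ A with q(x) = ζ. -/

import Mathlib

/-- The bilinear form associated to a quadratic form `q : A → kˣ`. -/
def Bform {A k : Type*} [AddCommGroup A] [Field k] (q : A → kˣ) (x y : A) : kˣ :=
  q (x + y) * (q x * q y)⁻¹

/-- `q : A → kˣ` is a quadratic form: `q(-x) = q(x)` and its associated form is bilinear. -/
def IsQuadraticForm {A k : Type*} [AddCommGroup A] [Field k] (q : A → kˣ) : Prop :=
  (∀ x, q (-x) = q x) ∧ ∀ x y z, Bform q (x + y) z = Bform q x z * Bform q y z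

/-- Non-degeneracy of the bilinear form associated to `q`. -/
def Nondeg {A k : Type*} [AddCommGroup A] [Field k] (q : A → kˣ) : Prop :=
  ∀ x, (∀ y, Bform q x y = 1) → x = 0

section Basics
variable {A k : Type*} [AddCommGroup A] [Field k] {q : A → kˣ}

lemma Bform_comm (q : A → kˣ) (x y : A) : Bform q x y = Bform q y x := by
  unfold Bform; rw [add_comm, mul_comm (q x)]

lemma Bform_zero_left (hq : IsQuadraticForm q) (y : A) : Bform q 0 y = 1 := by
  have h := hq.2 0 0 y
  rw [add_zero] at h
  exact (mul_eq_left.mp h.symm)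

lemma Bform_zero_right (hq : IsQuadraticForm q) (x : A) : Bform q x 0 = 1 := by
  rw [Bform_comm]; exact Bform_zero_left hq x

lemma q_zero (hq : IsQuadraticForm q) : q 0 = 1 := by
  have h := Bform_zero_left hq 0
  unfold Bform at h
  rw [add_zero, mul_inv_eq_one] at h
  exact (left_eq_mul.mp h)

lemma q_add (hq : IsQuadraticForm q) (x y : A) :
    q (x + y) = q x * q y * Bform q x y := by
  unfold Bform
  rw [mul_comm (q x * q y), mul_assoc, inv_mul_cancel, mul_one]

lemma Bform_add_right (hq : IsQuadraticForm q) (x y z : A) :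
    Bform q x (y + z) = Bform q x y * Bform q x z := by
  rw [Bform_comm, hq.2, Bform_comm q y x, Bform_comm q z x]

lemma Bform_nsmul_left (hq : IsQuadraticForm q) (m : ℕ) (x y : A) :
    Bform q (m • x) y = Bform q x y ^ m := by
  induction m with
  | zero => rw [zero_smul, pow_zero]; exact Bform_zero_left hq y
  | succ m ih => rw [succ_nsmul, hq.2, ih, pow_succ]

lemma Bform_nsmul_right (hq : IsQuadraticForm q) (m : ℕ) (x y : A) :
    Bform q x (m • y) = Bform q x y ^ m := by
  rw [Bform_comm, Bform_nsmul_left hq, Bform_comm]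

lemma Bform_self (hq : IsQuadraticForm q) (x : A) : Bform q x x = q x * q x := by
  have h := hq.2 x (-x) x
  rw [add_neg_cancel, Bform_zero_left hq] at h
  have hneg : Bform q (-x) x = q 0 * (q x * q x)⁻¹ := by
    unfold Bform
    rw [neg_add_cancel, hq.1]
  rw [hneg, q_zero hq, one_mul] at h
  have := (mul_inv_eq_one (a := Bform q x x) (b := q x * q x)).mp h.symm
  exact this

lemma q_nsmul (hq : IsQuadraticForm q) (m : ℕ) (x : A) :
    q (m • x) = q x ^ (m * m) := by
  induction m with
  | zero => rw [zero_smul, mul_zero, pow_zero]; exact q_zero hq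
  | succ m ih =>
    rw [succ_nsmul, q_add hq, ih, Bform_nsmul_left hq, Bform_self hq]
    calc q x ^ (m * m) * q x * (q x * q x) ^ m
        = q x ^ (m * m) * q x ^ 1 * (q x ^ m * q x ^ m) := by rw [pow_one, mul_pow]
      _ = q x ^ (m * m + 1 + (m + m)) := by rw [← pow_add, ← pow_add, ← pow_add]
      _ = q x ^ ((m + 1) * (m + 1)) := by congr 1; ring

lemma q_iso_nsmul (hq : IsQuadraticForm q) (m : ℕ) {x : A} (hx : q x = 1) :
    q (m • x) = 1 := by rw [q_nsmul hq, hx, one_pow]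

end Basics

section Sums
variable {A k : Type*} [AddCommGroup A] [Field k] {q : A → kˣ}

lemma Bform_sum_left (hq : IsQuadraticForm q) {ι : Type*} (s : Finset ι) (f : ι → A) (z : A) :
    Bform q (∑ i ∈ s, f i) z = ∏ i ∈ s, Bform q (f i) z := by
  induction s using Finset.cons_induction with
  | empty => simpa using Bform_zero_left hq z
  | cons a s ha ih => rw [Finset.sum_cons, Finset.prod_cons, hq.2, ih]

lemma Bform_sum_right (hq : IsQuadraticForm q) {ι : Type*} (s : Finset ι) (f : ι → A) (z : A) :
    Bform q z (∑ i ∈ s, f i) = ∏ i ∈ s, Bform q z (f i) := by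
  rw [Bform_comm, Bform_sum_left hq]
  exact Finset.prod_congr rfl fun i _ => Bform_comm q (f i) z

lemma q_sum (hq : IsQuadraticForm q) {ι : Type*} (s : Finset ι) (f : ι → A)
    (h1 : ∀ i ∈ s, q (f i) = 1)
    (h2 : ∀ i ∈ s, ∀ j ∈ s, i ≠ j → Bform q (f i) (f j) = 1) :
    q (∑ i ∈ s, f i) = 1 := by
  induction s using Finset.cons_induction with
  | empty => simpa using q_zero hq
  | cons a s ha ih =>
    rw [Finset.sum_cons, q_add hq, Bform_sum_right hq]
    rw [h1 a (Finset.mem_cons_self a s), ih (fun i hi => h1 i (Finset.mem_cons_of_mem hi))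
      (fun i hi j hj hij => h2 i (Finset.mem_cons_of_mem hi) j (Finset.mem_cons_of_mem hj) hij)]
    have : ∏ j ∈ s, Bform q (f a) (f j) = 1 :=
      Finset.prod_eq_one fun j hj => h2 a (Finset.mem_cons_self a s) j
        (Finset.mem_cons_of_mem hj) (fun h => ha (h ▸ hj))
    rw [this, mul_one, mul_one]

lemma orderOf_prod_eq {G : Type*} [CommGroup G] {n : ℕ} (s : Finset ℕ)
    (hs : s ⊆ n.primeFactors) (g : ℕ → G)
    (hg : ∀ p ∈ s, orderOf (g p) = p ^ n.factorization p) :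
    orderOf (∏ p ∈ s, g p) = ∏ p ∈ s, p ^ n.factorization p := by
  induction s using Finset.cons_induction with
  | empty => simp
  | cons a s ha ih =>
    rw [Finset.prod_cons, Finset.prod_cons]
    have hsub : s ⊆ n.primeFactors := fun x hx => hs (Finset.mem_cons_of_mem hx)
    have ihs := ih hsub (fun p hp => hg p (Finset.mem_cons_of_mem hp))
    have hco : (orderOf (g a)).Coprime (orderOf (∏ p ∈ s, g p)) := by
      rw [hg a (Finset.mem_cons_self a s), ihs]
      refine Nat.Coprime.prod_right fun p hp => Nat.Coprime.pow _ _ ?_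
      exact (Nat.coprime_primes (Nat.prime_of_mem_primeFactors (hs (Finset.mem_cons_self a s)))
        (Nat.prime_of_mem_primeFactors (hsub hp))).mpr (fun h => ha (h ▸ hp))
    rw [(Commute.all _ _).orderOf_mul_eq_mul_orderOf_of_coprime hco,
      hg a (Finset.mem_cons_self a s), ihs]

end Sums
section Key
variable {A k : Type*} [AddCommGroup A] [Field k] {q : A → kˣ}

/-- All `B`-values are `n`-th roots of unity when the exponent divides `n`. -/
lemma Bform_pow_exponent (hq : IsQuadraticForm q) {n : ℕ} (hexp : ∀ a : A, n • a = 0)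
    (x y : A) : Bform q x y ^ n = 1 := by
  rw [← Bform_nsmul_left hq, hexp, Bform_zero_left hq]

/-- There exist isotropic `x, y` whose `B`-value has order divisible by the `p`-part of `n`. -/
lemma exists_iso_pair (hq : IsQuadraticForm q) (hnd : Nondeg q)
    {n : ℕ} (hn0 : n ≠ 0) (hexp : AddMonoid.exponent A = n)
    (hgen : AddSubgroup.closure {x : A | q x = 1} = ⊤)
    {p : ℕ} (hp : p ∈ n.primeFactors) :
    ∃ x y : A, q x = 1 ∧ q y = 1 ∧ ¬ (Bform q x y) ^ (n / p) = 1 := by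
  by_contra hcon
  push_neg at hcon
  set c := n / p with hc
  have hS : ∀ x y : A, q x = 1 → q y = 1 → Bform q x y ^ c = 1 := by
    intro x y hx hy; exact hcon x y hx hy
  -- first subgroup
  have H1 : ∀ u : A, ∀ y : A, q y = 1 → Bform q u y ^ c = 1 := by
    have : AddSubgroup.closure {x : A | q x = 1} ≤
        { carrier := {u : A | ∀ y : A, q y = 1 → Bform q u y ^ c = 1}
          zero_mem' := fun y _ => by rw [Bform_zero_left hq, one_pow]
          add_mem' := by
            intro a b ha hb y hy
            rw [hq.2, mul_pow, ha y hy, hb y hy, one_mul]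
          neg_mem' := by
            intro a ha y hy
            have h := hq.2 a (-a) y
            rw [add_neg_cancel, Bform_zero_left hq] at h
            have : Bform q (-a) y = (Bform q a y)⁻¹ := by
              rw [eq_inv_iff_mul_eq_one, mul_comm]; exact h.symm
            rw [this, inv_pow, ha y hy, inv_one] } := by
      rw [AddSubgroup.closure_le]
      intro x hx y hy
      exact hS x y hx hy
    rw [hgen] at this
    intro u
    exact this (AddSubgroup.mem_top u)
  -- second subgroup
  have H2 : ∀ u v : A, Bform q u v ^ c = 1 := by
    have : AddSubgroup.closure {x : A | q x = 1} ≤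
        { carrier := {v : A | ∀ u : A, Bform q u v ^ c = 1}
          zero_mem' := fun u => by rw [Bform_zero_right hq, one_pow]
          add_mem' := by
            intro a b ha hb u
            rw [Bform_add_right hq, mul_pow, ha u, hb u, one_mul]
          neg_mem' := by
            intro a ha u
            have h := Bform_add_right hq u a (-a)
            rw [add_neg_cancel, Bform_zero_right hq] at h
            have : Bform q u (-a) = (Bform q u a)⁻¹ := by
              rw [eq_inv_iff_mul_eq_one, mul_comm]; exact h.symm
            rw [this, inv_pow, ha u, inv_one] } := by
      rw [AddSubgroup.closure_le]
      intro y hy u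
      exact H1 u y hy
    rw [hgen] at this
    intro u v
    exact this (AddSubgroup.mem_top v) u
  -- conclude exponent divides n / p
  have hcz : ∀ u : A, c • u = 0 := by
    intro u
    refine hnd (c • u) fun v => ?_
    rw [Bform_nsmul_left hq]
    exact H2 u v
  have hdvd : n ∣ c := by
    rw [← hexp]
    exact AddMonoid.exponent_dvd_of_forall_nsmul_eq_zero hcz
  have hcpos : 0 < c := Nat.div_pos (Nat.le_of_dvd (Nat.pos_of_ne_zero hn0)
    (Nat.dvd_of_mem_primeFactors hp)) (Nat.pos_of_mem_primeFactors hp)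
  have : n ≤ c := Nat.le_of_dvd hcpos hdvd
  have : c < n := Nat.div_lt_self (Nat.pos_of_ne_zero hn0)
    (Nat.Prime.one_lt (Nat.prime_of_mem_primeFactors hp))
  omega

end Key

section Key2
variable {A k : Type*} [AddCommGroup A] [Field k] {q : A → kˣ}

lemma exists_iso_pair_order (hq : IsQuadraticForm q) (hnd : Nondeg q)
    {n : ℕ} (hn0 : n ≠ 0) (hexp : AddMonoid.exponent A = n)
    (hgen : AddSubgroup.closure {x : A | q x = 1} = ⊤)
    {p : ℕ} (hp : p ∈ n.primeFactors) :
    ∃ x y : A, q x = 1 ∧ q y = 1 ∧ orderOf (Bform q x y) = p ^ n.factorization p ∧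
      (p ^ n.factorization p) • x = 0 ∧ (p ^ n.factorization p) • y = 0 := by
  obtain ⟨x, y, hx, hy, hB⟩ := exists_iso_pair hq hnd hn0 hexp hgen hp
  have hexp' : ∀ a : A, n • a = 0 := fun a => by
    rw [← hexp]; exact AddMonoid.exponent_nsmul_eq_zero a
  have pp := Nat.prime_of_mem_primeFactors hp
  set d := orderOf (Bform q x y) with hd
  set e := n.factorization p with he
  have hdn : d ∣ n := orderOf_dvd_of_pow_eq_one (Bform_pow_exponent hq hexp' x y)
  have hd0 : d ≠ 0 := fun h => hn0 (zero_dvd_iff.mp (h ▸ hdn))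
  have hndvd : ¬ d ∣ (n / p) := fun h => hB (orderOf_dvd_iff_pow_eq_one.mp h)
  -- the p-part of n divides d
  have hpe : p ^ e ∣ d := by
    by_contra hcon
    apply hndvd
    have hvd : d.factorization p < e :=
      lt_of_not_ge fun hle => hcon ((Nat.Prime.pow_dvd_iff_le_factorization pp hd0).mpr hle)
    have hdpn : d * p ∣ n := by
      rw [← Nat.factorization_le_iff_dvd (mul_ne_zero hd0 pp.ne_zero) hn0]
      rw [Nat.factorization_mul hd0 pp.ne_zero, Nat.Prime.factorization pp,
        Finsupp.le_def]
      intro a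
      rcases eq_or_ne a p with rfl | hne
      · simp only [Finsupp.coe_add, Pi.add_apply, Finsupp.single_eq_same]
        omega
      · have := (Nat.factorization_le_iff_dvd hd0 hn0).mpr hdn a
        simpa [Finsupp.single_eq_of_ne' (Ne.symm hne)] using this
    exact (Nat.dvd_div_iff_mul_dvd (Nat.dvd_of_mem_primeFactors hp)).mpr
      (by rwa [mul_comm] at hdpn)
  -- rescale to get exact order p ^ e and p-power annihilation
  set c' := ordCompl[p] n with hc'
  have hpc : p ^ e * c' = n := Nat.ordProj_mul_ordCompl_eq_self n p
  refine ⟨c' • x, c' • y, q_iso_nsmul hq _ hx, q_iso_nsmul hq _ hy, ?_, ?_, ?_⟩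
  · have hBxy : Bform q (c' • x) (c' • y) = Bform q x y ^ (c' * c') := by
      rw [Bform_nsmul_left hq, Bform_nsmul_right hq, ← pow_mul]
    rw [hBxy]
    have h1 : orderOf (Bform q x y ^ (c' * c')) ∣ p ^ e := by
      apply orderOf_dvd_of_pow_eq_one
      rw [← pow_mul]
      have : c' * c' * p ^ e = n * c' := by
        rw [mul_assoc, mul_comm c' (p ^ e), hpc, mul_comm]
      rw [this, pow_mul, Bform_pow_exponent hq hexp' x y, one_pow]
    have h2 : p ^ e ∣ orderOf (Bform q x y ^ (c' * c')) := by
      have hcne : c' * c' ≠ 0 := Nat.mul_ne_zero (Nat.ordCompl_pos p hn0).ne'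
          (Nat.ordCompl_pos p hn0).ne'
      rw [orderOf_pow' _ hcne, ← hd]
      have hc1 : (p ^ e).Coprime c' := Nat.Coprime.pow_left e (Nat.coprime_ordCompl pp hn0)
      have hco : (p ^ e).Coprime (c' * c') := Nat.Coprime.mul_right hc1 hc1
      have hco2 : (p ^ e).Coprime (Nat.gcd d (c' * c')) :=
        Nat.Coprime.coprime_dvd_right (Nat.gcd_dvd_right _ _) hco
      have hdd : p ^ e ∣ d / Nat.gcd d (c' * c') * Nat.gcd d (c' * c') := by
        rw [Nat.div_mul_cancel (Nat.gcd_dvd_left _ _)]; exact hpe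
      exact Nat.Coprime.dvd_of_dvd_mul_right hco2 hdd
    exact Nat.dvd_antisymm h1 h2
  · rw [smul_smul, hpc]; exact hexp' x
  · rw [smul_smul, hpc]; exact hexp' y

end Key2

/-- An isotropically generated metric group of exponent `n` attains every `n`-th root
of unity as a value of `q`. -/
theorem stmt7 {k : Type*} [Field k] [CharZero k] [IsAlgClosed k]
    {A : Type*} [AddCommGroup A] [Finite A]
    (q : A → kˣ) (hq : IsQuadraticForm q) (hnd : Nondeg q)
    (n : ℕ) (hn : AddMonoid.exponent A = n)
    (hgen : AddSubgroup.closure {x : A | q x = 1} = ⊤) :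
    ∀ ζ : kˣ, ζ ^ n = 1 → ∃ x : A, q x = ζ := by
  intro ζ hζ
  have hn0 : n ≠ 0 := fun h => AddMonoid.exponent_ne_zero_of_finite (h ▸ hn)
  have hexp' : ∀ a : A, n • a = 0 := fun a => by
    rw [← hn]; exact AddMonoid.exponent_nsmul_eq_zero a
  have key : ∀ p : ℕ, ∃ x y : A, q x = 1 ∧ q y = 1 ∧
      (p ∈ n.primeFactors → orderOf (Bform q x y) = p ^ n.factorization p ∧
        (p ^ n.factorization p) • x = 0 ∧ (p ^ n.factorization p) • y = 0) := by
    intro p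
    by_cases hp : p ∈ n.primeFactors
    · obtain ⟨x, y, h1, h2, h3, h4, h5⟩ := exists_iso_pair_order hq hnd hn0 hn hgen hp
      exact ⟨x, y, h1, h2, fun _ => ⟨h3, h4, h5⟩⟩
    · exact ⟨0, 0, q_zero hq, q_zero hq, fun h => absurd h hp⟩
  choose X Y hX hY hP using key
  set s := n.primeFactors with hs
  have hannX : ∀ p ∈ s, (p ^ n.factorization p) • X p = 0 := fun p hp => (hP p hp).2.1
  have hannY : ∀ p ∈ s, (p ^ n.factorization p) • Y p = 0 := fun p hp => (hP p hp).2.2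
  have horth : ∀ (a b : A) (p p' : ℕ), p ∈ s → p' ∈ s → p ≠ p' →
      (p ^ n.factorization p) • a = 0 → (p' ^ n.factorization p') • b = 0 →
      Bform q a b = 1 := by
    intro a b p p' hp hp' hne ha hb
    have h1 : Bform q a b ^ (p ^ n.factorization p) = 1 := by
      rw [← Bform_nsmul_left hq, ha, Bform_zero_left hq]
    have h2 : Bform q a b ^ (p' ^ n.factorization p') = 1 := by
      rw [← Bform_nsmul_right hq, hb, Bform_zero_right hq]
    have hco : (p ^ n.factorization p).Coprime (p' ^ n.factorization p') :=
      Nat.Coprime.pow _ _ ((Nat.coprime_primes (Nat.prime_of_mem_primeFactors hp)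
        (Nat.prime_of_mem_primeFactors hp')).mpr hne)
    have hdvd := Nat.dvd_gcd (orderOf_dvd_of_pow_eq_one h1) (orderOf_dvd_of_pow_eq_one h2)
    rw [Nat.Coprime] at hco
    rw [hco, Nat.dvd_one] at hdvd
    exact orderOf_eq_one_iff.mp hdvd
  set x := ∑ p ∈ s, X p with hx
  set y := ∑ p ∈ s, Y p with hy
  have hqx : q x = 1 := q_sum hq s X (fun p _ => hX p)
    (fun p hp p' hp' hne => horth _ _ p p' hp hp' hne (hannX p hp) (hannX p' hp'))
  have hqy : q y = 1 := q_sum hq s Y (fun p _ => hY p)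
    (fun p hp p' hp' hne => horth _ _ p p' hp hp' hne (hannY p hp) (hannY p' hp'))
  have hBxy : Bform q x y = ∏ p ∈ s, Bform q (X p) (Y p) := by
    rw [hx, hy, Bform_sum_left hq]
    refine Finset.prod_congr rfl fun p hp => ?_
    rw [Bform_sum_right hq]
    exact Finset.prod_eq_single_of_mem p hp fun p' hp' hne =>
      horth _ _ p p' hp hp' (Ne.symm hne) (hannX p hp) (hannY p' hp')
  have hord : orderOf (Bform q x y) = n := by
    rw [hBxy, orderOf_prod_eq s subset_rfl _ (fun p hp => (hP p hp).1)]
    have h := Nat.factorization_prod_pow_eq_self hn0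
    rwa [Finsupp.prod, Nat.support_factorization] at h
  haveI : NeZero n := ⟨hn0⟩
  have hprim : IsPrimitiveRoot ((Bform q x y : kˣ) : k) n := by
    have h : orderOf ((Bform q x y : kˣ) : k) = n := by rw [orderOf_units]; exact hord
    exact h ▸ IsPrimitiveRoot.orderOf _
  have hζk : ((ζ : kˣ) : k) ^ n = 1 := by
    rw [← Units.val_pow_eq_pow_val, hζ, Units.val_one]
  obtain ⟨i, -, hi⟩ := hprim.eq_pow_of_pow_eq_one hζk
  refine ⟨x + i • y, ?_⟩
  rw [q_add hq, hqx, q_iso_nsmul hq i hqy, one_mul, one_mul, Bform_nsmul_right hq]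
  exact Units.ext (by rw [Units.val_pow_eq_pow_val]; exact hi)
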